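/- Let u₁,u₂,u₃,v₁,v₂ ∈ ℚ with u₂,u₃,v₁ ≠ 0, with i·v₁ ≠ u₂ for all positive integers i, and (i²v₁ − i·u₂)v₂ ≠ u₁u₃ for all positive integers i. If x ∈ ℚ((t⁻¹)) with deg x ≥ 1 solves the Riccati equation (v₁t² + v₂)x' = u₁ + u₂tx + u₃x², then x has the generalized continued fraction expansion x = (1/u₃)·K(βᵢ / αᵢt) with partial numerators βᵢ = (i²v₁ − i u₂)v₂ − u₁u₃ and partial denominators αᵢt where αᵢ = (2i+1)v₁ − u₂, i ≥ 0. -/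

import Mathlib

open Polynomial

/-- The formal derivative (with respect to `X`) of a formal Laurent series. -/
noncomputable def lsDeriv {F : Type*} [Field F] (f : LaurentSeries F) : LaurentSeries F where
  coeff n := (n + 1 : ℤ) * f.coeff (n + 1)
  isPWO_support' := by
    refine ((HahnSeries.single (-1 : ℤ) (1 : F) * f).isPWO_support).mono ?_
    intro n hn
    have hf : f.coeff (n + 1) ≠ 0 := by
      intro h
      apply hn
      simp [h]
    have hcoeff : (HahnSeries.single (-1 : ℤ) (1 : F) * f).coeff n = f.coeff (n + 1) := by
      have := HahnSeries.coeff_single_mul_add (r := (1 : F)) (x := f) (b := (-1 : ℤ)) (a := n + 1)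
      simpa using this
    simp only [HahnSeries.mem_support, hcoeff]
    exact hf

variable {F : Type*} [Field F]

@[simp] lemma lsDeriv_coeff (f : LaurentSeries F) (n : ℤ) :
    (lsDeriv f).coeff n = (n + 1 : ℤ) * f.coeff (n + 1) := rfl

lemma single_mul_coeff (a : ℤ) (r : F) (f : LaurentSeries F) (n : ℤ) :
    (HahnSeries.single a r * f).coeff n = r * f.coeff (n - a) := by
  have := HahnSeries.coeff_single_mul_add (r := r) (x := f) (b := a) (a := n - a)
  rw [sub_add_cancel] at this
  exact this

lemma lsDeriv_add (f g : LaurentSeries F) : lsDeriv (f + g) = lsDeriv f + lsDeriv g := by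
  ext n; simp [mul_add]

lemma lsDeriv_single_mul (a : ℤ) (r : F) (f : LaurentSeries F) :
    lsDeriv (HahnSeries.single a r * f)
      = HahnSeries.single (a - 1) ((a : ℤ) • r) * f + HahnSeries.single a r * lsDeriv f := by
  ext n
  simp only [lsDeriv_coeff, single_mul_coeff, HahnSeries.coeff_add, zsmul_eq_mul]
  have h1 : n + 1 - a = n - (a - 1) := by ring
  rw [h1]
  push_cast
  ring

open PowerSeries in
lemma lsDeriv_coe (f : PowerSeries F) :
    lsDeriv (HahnSeries.ofPowerSeries ℤ F f) =
      HahnSeries.ofPowerSeries ℤ F (PowerSeries.derivativeFun f) := by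
  ext n
  rw [lsDeriv_coeff, PowerSeries.coeff_coe, PowerSeries.coeff_coe]
  rcases lt_trichotomy n 0 with h | h | h
  · rw [if_pos h]
    rcases eq_or_lt_of_le (show n + 1 ≤ 0 by omega) with h2 | h2
    · rw [if_neg (by omega)]
      push_cast [h2]
      ring
    · rw [if_pos h2, mul_zero]
  · subst h
    simp [PowerSeries.derivativeFun, ← PowerSeries.coeff_zero_eq_constantCoeff_apply, PowerSeries.coeff_derivative]
  · rw [if_neg (by omega), if_neg (by omega)]
    erw [PowerSeries.coeff_derivativeFun]
    have h3 : ((n + 1).natAbs : ℤ) = (n.natAbs : ℤ) + 1 := by omega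
    have h4 : (n + 1).natAbs = n.natAbs + 1 := by omega
    rw [h4]
    have h5 : ((n.natAbs : F)) = ((n : ℤ) : F) := by
      rw [← Int.cast_natCast]; congr 1; omega
    push_cast [h5]
    ring

lemma hs_single_add (a : ℤ) (r s : F) :
    (HahnSeries.single a (r + s) : LaurentSeries F)
      = HahnSeries.single a r + HahnSeries.single a s := by
  ext n
  by_cases h : n = a <;> simp [HahnSeries.coeff_single, h]

lemma lsDeriv_mul (f g : LaurentSeries F) :
    lsDeriv (f * g) = lsDeriv f * g + f * lsDeriv g := by
  rcases eq_or_ne f 0 with rfl | hf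
  · have : lsDeriv (0 : LaurentSeries F) = 0 := by ext n; simp
    simp [this]
  rcases eq_or_ne g 0 with rfl | hg
  · have : lsDeriv (0 : LaurentSeries F) = 0 := by ext n; simp
    simp [this]
  set a := f.order
  set b := g.order
  set F' := f.powerSeriesPart
  set G' := g.powerSeriesPart
  have hfe : f = HahnSeries.single a 1 * HahnSeries.ofPowerSeries ℤ F F' :=
    (LaurentSeries.single_order_mul_powerSeriesPart f).symm
  have hge : g = HahnSeries.single b 1 * HahnSeries.ofPowerSeries ℤ F G' :=
    (LaurentSeries.single_order_mul_powerSeriesPart g).symm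
  have hfg : f * g = HahnSeries.single (a + b) 1 *
      HahnSeries.ofPowerSeries ℤ F (F' * G') := by
    rw [hfe, hge, map_mul]
    rw [show (HahnSeries.single a 1 * HahnSeries.ofPowerSeries ℤ F F') *
        (HahnSeries.single b 1 * HahnSeries.ofPowerSeries ℤ F G')
      = (HahnSeries.single a 1 * HahnSeries.single b 1) *
        (HahnSeries.ofPowerSeries ℤ F F' * HahnSeries.ofPowerSeries ℤ F G') by ring]
    rw [HahnSeries.single_mul_single, one_mul]
  rw [hfg, lsDeriv_single_mul, lsDeriv_coe, hfe, hge, lsDeriv_single_mul, lsDeriv_single_mul,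
    lsDeriv_coe, lsDeriv_coe, PowerSeries.derivativeFun_mul, smul_eq_mul, smul_eq_mul, map_add, map_mul, map_mul]
  have expand : ((a + b : ℤ) • (1 : F)) = (a : ℤ) • (1 : F) + (b : ℤ) • (1 : F) := by
    simp [add_smul]
  rw [expand, hs_single_add]
  have h1 : (HahnSeries.single (a + b - 1) ((a:ℤ) • (1:F)) : LaurentSeries F)
      = HahnSeries.single (a - 1) ((a:ℤ) • (1:F)) * HahnSeries.single b 1 := by
    rw [HahnSeries.single_mul_single, mul_one]; congr 1; ring
  have h2 : (HahnSeries.single (a + b - 1) ((b:ℤ) • (1:F)) : LaurentSeries F)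
      = HahnSeries.single a 1 * HahnSeries.single (b - 1) ((b:ℤ) • (1:F)) := by
    rw [HahnSeries.single_mul_single, one_mul]; congr 1; ring
  have h3 : (HahnSeries.single (a + b) (1:F) : LaurentSeries F)
      = HahnSeries.single a 1 * HahnSeries.single b 1 := by
    rw [HahnSeries.single_mul_single, one_mul]
  rw [h1, h2, h3]
  simp only [map_mul]
  ring

/-- `t`, as an element of `ℚ((t⁻¹))`: the field of Laurent series in `X = t⁻¹`,
so `t = X⁻¹` is the Hahn series with a single coefficient `1` in degree `-1`. -/
noncomputable def lsT : LaurentSeries ℚ := HahnSeries.single (-1 : ℤ) 1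

/-- The formal derivative with respect to `t` on `ℚ((t⁻¹))`: since `X = t⁻¹`,
`d/dt = -X² · d/dX`. -/
noncomputable def tDeriv (f : LaurentSeries ℚ) : LaurentSeries ℚ :=
  -(HahnSeries.single (2 : ℤ) (1 : ℚ)) * lsDeriv f

lemma tDeriv_coeff (f : LaurentSeries ℚ) (n : ℤ) :
    (tDeriv f).coeff n = -((n - 1 : ℤ) * f.coeff (n - 1)) := by
  have h0 : tDeriv f = -(HahnSeries.single (2:ℤ) (1:ℚ) * lsDeriv f) := by
    rw [tDeriv]; ring
  rw [h0, HahnSeries.coeff_neg, single_mul_coeff, one_mul, lsDeriv_coeff]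
  have : n - 2 + 1 = n - 1 := by ring
  rw [this]

lemma tDeriv_add (f g : LaurentSeries ℚ) : tDeriv (f + g) = tDeriv f + tDeriv g := by
  ext n; simp only [tDeriv_coeff, HahnSeries.coeff_add]; ring_nf

lemma tDeriv_sub (f g : LaurentSeries ℚ) : tDeriv (f - g) = tDeriv f - tDeriv g := by
  ext n; simp only [tDeriv_coeff, HahnSeries.coeff_sub]; ring_nf

lemma tDeriv_mul (f g : LaurentSeries ℚ) :
    tDeriv (f * g) = tDeriv f * g + f * tDeriv g := by
  rw [tDeriv, tDeriv, tDeriv, lsDeriv_mul]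
  ring

lemma one_coeff' (n : ℤ) : ((1 : LaurentSeries ℚ)).coeff n = if n = 0 then 1 else 0 := by
  rw [← HahnSeries.single_zero_one, HahnSeries.coeff_single]
  split <;> rfl

lemma tDeriv_one : tDeriv (1 : LaurentSeries ℚ) = 0 := by
  ext n
  rw [tDeriv_coeff, one_coeff']
  rcases eq_or_ne (n - 1) 0 with h | h
  · rw [if_pos h, h]; simp
  · rw [if_neg h]; simp

lemma tDeriv_single (a : ℤ) (r : ℚ) :
    tDeriv (HahnSeries.single a r) = HahnSeries.single (a + 1) (-(a : ℚ) * r) := by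
  ext n
  rw [tDeriv_coeff, HahnSeries.coeff_single, HahnSeries.coeff_single]
  rcases eq_or_ne n (a + 1) with h | h
  · rw [if_pos (by omega : n - 1 = a), if_pos h]
    subst h; push_cast; ring
  · rw [if_neg (by omega : ¬ n - 1 = a), if_neg h]; simp

lemma tDeriv_lsT : tDeriv lsT = 1 := by
  rw [lsT, tDeriv_single, ← HahnSeries.single_zero_one]
  norm_num

lemma tDeriv_C (r : ℚ) : tDeriv (HahnSeries.single 0 r) = 0 := by
  rw [tDeriv_single]
  norm_num

lemma tDeriv_inv (w : LaurentSeries ℚ) (hw : w ≠ 0) :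
    tDeriv w⁻¹ = -(w⁻¹ * w⁻¹) * tDeriv w := by
  have h1 : w * w⁻¹ = 1 := mul_inv_cancel₀ hw
  have h2 := congrArg tDeriv h1
  rw [tDeriv_mul, tDeriv_one] at h2
  have key : w * tDeriv w⁻¹ = -(tDeriv w * w⁻¹) := by linear_combination h2
  have hinv : w⁻¹ * w = 1 := inv_mul_cancel₀ hw
  linear_combination w⁻¹ * key - tDeriv w⁻¹ * hinv

lemma le_orderTop_of (f : LaurentSeries ℚ) (s : ℤ) (hf : ∀ k < s, f.coeff k = 0) :
    (s : WithTop ℤ) ≤ f.orderTop := by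
  rcases eq_or_ne f 0 with rfl | h
  · simp
  · rcases le_or_gt s f.order with h' | h'
    · rw [HahnSeries.orderTop_of_ne_zero h, ← HahnSeries.order_of_ne h]
      exact_mod_cast h'
    · exact absurd (hf _ h') ((mt HahnSeries.coeff_order_eq_zero.mp h))

lemma le_order_of (f : LaurentSeries ℚ) (s : ℤ) (h : f ≠ 0)
    (hf : ∀ k < s, f.coeff k = 0) : s ≤ f.order := by
  rcases le_or_gt s f.order with h' | h'
  · exact h'
  · exact absurd (hf _ h') ((mt HahnSeries.coeff_order_eq_zero.mp h))

lemma mul_coeff_zero (f g : LaurentSeries ℚ) (sf sg : ℤ)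
    (hf : ∀ k < sf, f.coeff k = 0) (hg : ∀ k < sg, g.coeff k = 0)
    (n : ℤ) (hn : n < sf + sg) : (f * g).coeff n = 0 := by
  apply HahnSeries.coeff_eq_zero_of_lt_orderTop
  calc (n : WithTop ℤ) < ((sf + sg : ℤ) : WithTop ℤ) := by exact_mod_cast hn
    _ = (sf : WithTop ℤ) + (sg : WithTop ℤ) := by push_cast; rfl
    _ ≤ f.orderTop + g.orderTop := add_le_add (le_orderTop_of f sf hf) (le_orderTop_of g sg hg)
    _ ≤ (f * g).orderTop := HahnSeries.orderTop_add_le_mul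

lemma order_add_eq (f g : LaurentSeries ℚ) (hf : f ≠ 0)
    (h : ∀ k ≤ f.order, g.coeff k = 0) : (f + g) ≠ 0 ∧ (f + g).order = f.order := by
  have hco : (f + g).coeff f.order ≠ 0 := by
    rw [HahnSeries.coeff_add, h _ le_rfl, add_zero]
    exact (mt HahnSeries.coeff_order_eq_zero.mp hf)
  have hne : f + g ≠ 0 := by
    intro h0; rw [h0] at hco; exact hco rfl
  refine ⟨hne, le_antisymm (HahnSeries.order_le_of_coeff_ne_zero hco) ?_⟩
  apply le_order_of _ _ hne
  intro k hk
  rw [HahnSeries.coeff_add, HahnSeries.coeff_eq_zero_of_lt_order hk, h _ hk.le, add_zero]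

lemma order_inv (f : LaurentSeries ℚ) (h : f ≠ 0) : f⁻¹.order = -f.order := by
  have h2 : f * f⁻¹ = 1 := mul_inv_cancel₀ h
  have h3 := HahnSeries.order_mul (x := f) (y := f⁻¹) h (inv_ne_zero h)
  rw [h2] at h3
  have : (1 : LaurentSeries ℚ).order = 0 := HahnSeries.order_one
  omega

noncomputable def Cq (r : ℚ) : LaurentSeries ℚ := algebraMap ℚ (LaurentSeries ℚ) r

lemma Cq_single (r : ℚ) : Cq r = HahnSeries.single 0 r := by
  have h : algebraMap ℚ (LaurentSeries ℚ) r = HahnSeries.C r :=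
    RingHom.congr_fun (Subsingleton.elim _ _) r
  rw [Cq, h, HahnSeries.C_apply]

lemma Cq_mul_coeff (r : ℚ) (f : LaurentSeries ℚ) (n : ℤ) :
    (Cq r * f).coeff n = r * f.coeff n := by
  rw [Cq_single, single_mul_coeff, sub_zero]

lemma Cq_lsT_mul_coeff (r : ℚ) (f : LaurentSeries ℚ) (n : ℤ) :
    (Cq r * lsT * f).coeff n = r * f.coeff (n + 1) := by
  rw [Cq_single, lsT, HahnSeries.single_mul_single, mul_one, zero_add, single_mul_coeff]
  norm_num

lemma riccati_coeff (v₁ v₂ b s : ℚ) (z : LaurentSeries ℚ)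
    (hR : (Cq v₁ * lsT ^ 2 + Cq v₂) * tDeriv z = - Cq b + Cq s * lsT * z + z ^ 2) (n : ℤ) :
    -(v₁ * ((n + 1 : ℤ) * z.coeff (n + 1))) - v₂ * ((n - 1 : ℤ) * z.coeff (n - 1))
      = -(if n = 0 then b else 0) + s * z.coeff (n + 1) + (z ^ 2).coeff n := by
  have h := congrArg (fun f : LaurentSeries ℚ => f.coeff n) hR
  have hL : ((Cq v₁ * lsT ^ 2 + Cq v₂) * tDeriv z).coeff n
      = -(v₁ * ((n + 1 : ℤ) * z.coeff (n + 1))) - v₂ * ((n - 1 : ℤ) * z.coeff (n - 1)) := by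
    rw [show (Cq v₁ * lsT ^ 2 + Cq v₂) * tDeriv z
        = Cq v₁ * (lsT ^ 2 * tDeriv z) + Cq v₂ * tDeriv z by ring,
      HahnSeries.coeff_add, Cq_mul_coeff, Cq_mul_coeff,
      show lsT ^ 2 = HahnSeries.single (-2 : ℤ) (1 : ℚ) by
        rw [lsT, sq, HahnSeries.single_mul_single]; norm_num,
      single_mul_coeff, one_mul, tDeriv_coeff, tDeriv_coeff]
    have e1 : n - -2 - 1 = n + 1 := by ring
    rw [e1]
    push_cast
    ring
  have hRc : (- Cq b + Cq s * lsT * z + z ^ 2).coeff n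
      = -(if n = 0 then b else 0) + s * z.coeff (n + 1) + (z ^ 2).coeff n := by
    rw [HahnSeries.coeff_add, HahnSeries.coeff_add, HahnSeries.coeff_neg, Cq_single,
      HahnSeries.coeff_single, Cq_lsT_mul_coeff]
    split <;> rfl
  rw [hL, hRc] at h
  exact h

lemma lead_eq (y : LaurentSeries ℚ) (hy : y ≠ 0) : y.leadingCoeff = y.coeff y.order := by
  rw [HahnSeries.leadingCoeff_eq]

lemma riccati_shape (v₁ v₂ b s : ℚ) (hs2 : 2*v₁ - s ≠ 0)
    (hb : b + (v₁ - s)*v₂ ≠ 0)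
    (z : LaurentSeries ℚ) (hz : z ≠ 0) (hord : z.order ≤ -1)
    (hR : (Cq v₁ * lsT ^ 2 + Cq v₂) * tDeriv z = - Cq b + Cq s * lsT * z + z ^ 2) :
    z.order = -1 ∧ z.coeff (-1) = v₁ - s ∧
      (z - HahnSeries.single (-1 : ℤ) (v₁ - s)) ≠ 0 ∧
      (z - HahnSeries.single (-1 : ℤ) (v₁ - s)).order = 1 := by
  -- Step 1 : order = -1
  have horder : z.order = -1 := by
    rcases eq_or_lt_of_le hord with h | h
    · exact h
    have hm : z.order ≤ -2 := by omega
    have h0 := riccati_coeff v₁ v₂ b s z hR (2 * z.order)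
    have e1 : z.coeff (2 * z.order + 1) = 0 :=
      HahnSeries.coeff_eq_zero_of_lt_order (by omega)
    have e2 : z.coeff (2 * z.order - 1) = 0 :=
      HahnSeries.coeff_eq_zero_of_lt_order (by omega)
    have e3 : (z ^ 2).coeff (2 * z.order) = z.coeff z.order * z.coeff z.order := by
      rw [sq, show 2 * z.order = z.order + z.order by ring,
        HahnSeries.coeff_mul_order_add_order z z, lead_eq z hz]
    rw [e1, e2, e3, if_neg (by omega)] at h0
    have := (mt HahnSeries.coeff_order_eq_zero.mp hz)
    simp only [mul_zero, neg_zero, zero_sub, sub_zero, zero_add, neg_eq_zero] at h0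
    exact absurd (by linarith [h0] : z.coeff z.order * z.coeff z.order = 0)
      (mul_ne_zero this this)
  set c := z.coeff (-1) with hcdef
  have hc : c ≠ 0 := by
    have := (mt HahnSeries.coeff_order_eq_zero.mp hz)
    rwa [horder] at this
  -- Step 2 : leading coefficient
  have hcval : c = v₁ - s := by
    have h0 := riccati_coeff v₁ v₂ b s z hR (-2)
    have e1 : z.coeff (-3) = 0 := HahnSeries.coeff_eq_zero_of_lt_order (by omega)
    have e2 : (z ^ 2).coeff (-2) = c * c := by
      rw [sq, show (-2 : ℤ) = z.order + z.order by omega,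
        HahnSeries.coeff_mul_order_add_order z z, lead_eq z hz, horder]
    norm_num [e1, e2] at h0
    have : (v₁ - s - c) * c = 0 := by linarith [h0]
    rcases mul_eq_zero.mp this with h | h
    · linarith
    · exact absurd h hc
  -- decomposition
  set w := z - HahnSeries.single (-1 : ℤ) c with hwdef
  have hdec : z = HahnSeries.single (-1 : ℤ) c + w := by rw [hwdef]; ring
  have hwneg : ∀ k < (0 : ℤ), w.coeff k = 0 := by
    intro k hk
    rw [hwdef, HahnSeries.coeff_sub]
    rcases eq_or_ne k (-1) with rfl | hk1
    · simp [HahnSeries.coeff_single, hcdef]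
    · rw [HahnSeries.coeff_single, if_neg hk1,
        HahnSeries.coeff_eq_zero_of_lt_order (by omega), sub_zero]
  have hz2 : z ^ 2 = HahnSeries.single (-2 : ℤ) (c * c)
      + (HahnSeries.single (-1 : ℤ) c * w + HahnSeries.single (-1 : ℤ) c * w + w * w) := by
    have : z ^ 2 = HahnSeries.single (-1 : ℤ) c * HahnSeries.single (-1 : ℤ) c
        + (HahnSeries.single (-1 : ℤ) c * w + HahnSeries.single (-1 : ℤ) c * w + w * w) := by
      rw [hdec]; ring
    rw [this, HahnSeries.single_mul_single]
    norm_num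
  -- Step 3 : constant coefficient is zero
  have hd : z.coeff 0 = 0 := by
    have h0 := riccati_coeff v₁ v₂ b s z hR (-1)
    have e1 : z.coeff (-2) = 0 := HahnSeries.coeff_eq_zero_of_lt_order (by omega)
    have e2 : (z ^ 2).coeff (-1) = c * z.coeff 0 + c * z.coeff 0 := by
      rw [hz2, HahnSeries.coeff_add, HahnSeries.coeff_add, HahnSeries.coeff_add,
        HahnSeries.coeff_single, if_neg (by omega), single_mul_coeff,
        mul_coeff_zero w w 0 0 hwneg hwneg (-1) (by omega)]
      have : w.coeff (-1 - -1) = z.coeff 0 := by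
        rw [hwdef, HahnSeries.coeff_sub, HahnSeries.coeff_single]
        norm_num
      rw [this]
      ring
    norm_num at h0
    rw [e1, e2] at h0
    norm_num at h0
    have : z.coeff 0 * (s + 2 * c) = 0 := by linarith [h0]
    rcases mul_eq_zero.mp this with h | h
    · exact h
    · rw [hcval] at h
      exact absurd (by linarith : 2 * v₁ - s = 0) hs2
  have hw0 : ∀ k < (1 : ℤ), w.coeff k = 0 := by
    intro k hk
    rcases eq_or_ne k 0 with rfl | hk0
    · rw [hwdef, HahnSeries.coeff_sub, HahnSeries.coeff_single, if_neg (by omega), hd, sub_zero]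
    · exact hwneg k (by omega)
  -- Step 4 : coefficient 1 of w is nonzero
  have hwe : w.coeff 1 ≠ 0 := by
    have h0 := riccati_coeff v₁ v₂ b s z hR 0
    have ew : w.coeff 1 = z.coeff 1 := by
      rw [hwdef, HahnSeries.coeff_sub, HahnSeries.coeff_single, if_neg (by omega), sub_zero]
    have e2 : (z ^ 2).coeff 0 = c * w.coeff 1 + c * w.coeff 1 := by
      rw [hz2, HahnSeries.coeff_add, HahnSeries.coeff_add, HahnSeries.coeff_add,
        HahnSeries.coeff_single, if_neg (by omega), single_mul_coeff,
        mul_coeff_zero w w 1 1 hw0 hw0 0 (by omega)]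
      norm_num
    norm_num at h0
    rw [e2] at h0
    intro hcon
    rw [hcon, ← ew, hcon] at h0
    rw [← hcdef] at h0
    rw [hcval] at h0
    exact hb (by linarith [h0])
  have hwne : w ≠ 0 := fun h0 => hwe (by rw [h0]; rfl)
  have hworder : w.order = 1 :=
    le_antisymm (HahnSeries.order_le_of_coeff_ne_zero hwe) (le_order_of w 1 hwne hw0)
  rw [hcval] at hwdef
  refine ⟨horder, hcval, ?_, ?_⟩
  · rw [← hwdef]; exact hwne
  · rw [← hwdef]; exact hworder

lemma tDeriv_Cq (r : ℚ) : tDeriv (Cq r) = 0 := by rw [Cq_single, tDeriv_C]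

lemma riccati_next (v₁ v₂ b s α : ℚ) (hα : α = v₁ - s)
    (z : LaurentSeries ℚ)
    (hR : (Cq v₁ * lsT ^ 2 + Cq v₂) * tDeriv z = - Cq b + Cq s * lsT * z + z ^ 2)
    (w : LaurentSeries ℚ) (hw : w = z - HahnSeries.single (-1 : ℤ) α) (hwne : w ≠ 0) :
    (Cq v₁ * lsT ^ 2 + Cq v₂) * tDeriv (Cq (b + α * v₂) * w⁻¹)
      = - Cq (b + α * v₂) + Cq (s - 2 * v₁) * lsT * (Cq (b + α * v₂) * w⁻¹)
        + (Cq (b + α * v₂) * w⁻¹) ^ 2 := by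
  have hsingle : (HahnSeries.single (-1 : ℤ) α : LaurentSeries ℚ) = Cq α * lsT := by
    rw [Cq_single, lsT, HahnSeries.single_mul_single]
    norm_num
  have hwd : tDeriv w = tDeriv z - Cq α := by
    rw [hw, tDeriv_sub, hsingle, tDeriv_mul, tDeriv_Cq, tDeriv_lsT, zero_mul, zero_add, mul_one]
  have hC1 : Cq (s - 2 * v₁) = Cq s - 2 * Cq v₁ := by
    simp only [Cq, map_sub, map_mul, map_ofNat]
  have hC2 : Cq (b + α * v₂) = Cq b + Cq α * Cq v₂ := by
    simp only [Cq, map_add, map_mul]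
  have hC3 : Cq α = Cq v₁ - Cq s := by simp only [hα, Cq, map_sub]
  have key : -((Cq v₁ * lsT ^ 2 + Cq v₂) * tDeriv w)
      = - w ^ 2 + Cq (s - 2 * v₁) * lsT * w + Cq (b + α * v₂) := by
    rw [hwd, hw, hsingle, hC1, hC2, hC3]
    linear_combination -hR
  have hwinv : w⁻¹ * w = 1 := inv_mul_cancel₀ hwne
  have hder : tDeriv (Cq (b + α * v₂) * w⁻¹)
      = Cq (b + α * v₂) * (-(w⁻¹ * w⁻¹) * tDeriv w) := by
    rw [tDeriv_mul, tDeriv_Cq, zero_mul, zero_add, tDeriv_inv w hwne]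
  rw [hder]
  linear_combination (Cq (b + α * v₂) * w⁻¹ * w⁻¹) * key +
    (Cq (b + α * v₂) * (Cq (s - 2 * v₁) * lsT * w⁻¹ + Cq (b + α * v₂) * (w⁻¹ * w⁻¹)
      + Cq (b + α * v₂) * w⁻¹ * w⁻¹ - Cq (b + α * v₂) * w⁻¹ * w⁻¹ * (w⁻¹ * w)
      - (1 + w⁻¹ * w))) * hwinv
    + (Cq (b + α * v₂) ^ 2 * w⁻¹ ^ 2 * (w * w⁻¹ - 2)) * hwinv

lemma hs_single_neg (a : ℤ) (r : ℚ) :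
    -(HahnSeries.single a r : LaurentSeries ℚ) = HahnSeries.single a (-r) := by
  ext n
  by_cases h : n = a <;> simp [HahnSeries.coeff_single, h]

lemma neg_one_single : (-1 : LaurentSeries ℚ) = HahnSeries.single 0 (-1) := by
  rw [← hs_single_neg, ← HahnSeries.single_zero_one]
/-- Let `u₁,u₂,u₃,v₁,v₂ ∈ ℚ` with `u₂,u₃,v₁ ≠ 0`, with `i·v₁ ≠ u₂` for all positive
integers `i`, and `(i²v₁ − i·u₂)v₂ ≠ u₁u₃` for all positive integers `i`.  If
`x ∈ ℚ((t⁻¹))` with `deg x ≥ 1` solves the Riccati equation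
`(v₁t² + v₂)x' = u₁ + u₂tx + u₃x²`, then `x` has the generalized continued fraction
expansion `x = (1/u₃)·K(βᵢ / αᵢt)` with partial numerators
`βᵢ = (i²v₁ − i u₂)v₂ − u₁u₃` and partial denominators `αᵢ·t`, `αᵢ = (2i+1)v₁ − u₂`:
the convergents `pₙ/qₙ`, defined by the standard recursions, converge to `u₃·x` in the
`t⁻¹`-adic sense, i.e. the order of `u₃·x − pₙ/qₙ` tends to `⊤`. -/
theorem riccati_continued_fraction (u₁ u₂ u₃ v₁ v₂ : ℚ)
    (hu₂ : u₂ ≠ 0) (hu₃ : u₃ ≠ 0) (hv₁ : v₁ ≠ 0)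
    (h1 : ∀ i : ℕ, 0 < i → (i : ℚ) * v₁ ≠ u₂)
    (h2 : ∀ i : ℕ, 0 < i → ((i : ℚ) ^ 2 * v₁ - (i : ℚ) * u₂) * v₂ ≠ u₁ * u₃)
    (x : LaurentSeries ℚ) (hdeg : x.order ≤ -1)
    (hx : (algebraMap ℚ (LaurentSeries ℚ) v₁ * lsT ^ 2 + algebraMap ℚ (LaurentSeries ℚ) v₂)
          * tDeriv x
        = algebraMap ℚ (LaurentSeries ℚ) u₁
          + algebraMap ℚ (LaurentSeries ℚ) u₂ * lsT * x
          + algebraMap ℚ (LaurentSeries ℚ) u₃ * x ^ 2)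
    -- the partial quotients `aᵢ = αᵢ t` and partial numerators `βᵢ`:
    (a : ℕ → LaurentSeries ℚ) (β : ℕ → LaurentSeries ℚ)
    (ha : ∀ i : ℕ, a i = algebraMap ℚ (LaurentSeries ℚ) ((2 * i + 1) * v₁ - u₂) * lsT)
    (hβ : ∀ i : ℕ, β i =
      algebraMap ℚ (LaurentSeries ℚ) (((i : ℚ) ^ 2 * v₁ - (i : ℚ) * u₂) * v₂ - u₁ * u₃))
    -- the convergents `pₙ/qₙ`:
    (p q : ℕ → LaurentSeries ℚ)
    (hp0 : p 0 = a 0) (hp1 : p 1 = a 0 * a 1 + β 1)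
    (hq0 : q 0 = 1) (hq1 : q 1 = a 1)
    (hp : ∀ n, p (n + 2) = a (n + 2) * p (n + 1) + β (n + 2) * p n)
    (hq : ∀ n, q (n + 2) = a (n + 2) * q (n + 1) + β (n + 2) * q n) :
    ∀ N : ℤ, ∃ n₀ : ℕ, ∀ n ≥ n₀, q n ≠ 0 ∧
      (N : WithTop ℤ) ≤ (algebraMap ℚ (LaurentSeries ℚ) u₃ * x - p n / q n).orderTop := by
  -- scalar data
  set sq' : ℕ → ℚ := fun i => u₂ - 2 * (i : ℚ) * v₁ with hsq'
  set bq : ℕ → ℚ := fun i => ((i : ℚ) ^ 2 * v₁ - (i : ℚ) * u₂) * v₂ - u₁ * u₃ with hbq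
  set αf : ℕ → ℚ := fun i => v₁ - sq' i with hαf
  have hα_eq : ∀ i : ℕ, αf i = (2 * (i : ℚ) + 1) * v₁ - u₂ := by
    intro i; simp only [hαf, hsq']; ring
  have hα_ne : ∀ i : ℕ, αf i ≠ 0 := by
    intro i
    rw [hα_eq]
    intro h
    exact h1 (2 * i + 1) (by omega) (by push_cast; linarith)
  have hs2 : ∀ i : ℕ, 2 * v₁ - sq' i ≠ 0 := by
    intro i h
    exact h1 (2 * i + 2) (by omega) (by push_cast [hsq'] at h ⊢; linarith)
  have hbq_succ : ∀ i : ℕ, bq i + αf i * v₂ = bq (i + 1) := by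
    intro i; simp only [hbq, hαf, hsq']; push_cast; ring
  have hbq_ne : ∀ i : ℕ, 0 < i → bq i ≠ 0 := by
    intro i hi h
    exact h2 i hi (by simp only [hbq] at h; linarith)
  have hb' : ∀ i : ℕ, bq i + (v₁ - sq' i) * v₂ ≠ 0 := by
    intro i
    rw [show v₁ - sq' i = αf i from rfl, hbq_succ i]
    exact hbq_ne (i + 1) (by omega)
  -- the full quotients
  set Z : ℕ → LaurentSeries ℚ := fun i => Nat.rec (Cq u₃ * x) (fun k zk =>
    Cq (bq (k + 1)) * (zk - HahnSeries.single (-1 : ℤ) (αf k))⁻¹) i with hZ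
  have hZ0 : Z 0 = Cq u₃ * x := rfl
  have hZs : ∀ k, Z (k + 1) = Cq (bq (k + 1)) * (Z k - HahnSeries.single (-1 : ℤ) (αf k))⁻¹ :=
    fun k => rfl
  have hxne : x ≠ 0 := by
    intro h
    rw [h, HahnSeries.order_zero] at hdeg
    omega
  have hCqne : ∀ r : ℚ, r ≠ 0 → Cq r ≠ 0 := by
    intro r hr
    rw [Cq_single]
    exact HahnSeries.single_ne_zero hr
  have good : ∀ i, Z i ≠ 0 ∧ (Z i).order ≤ -1 ∧
      ((Cq v₁ * lsT ^ 2 + Cq v₂) * tDeriv (Z i)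
        = - Cq (bq i) + Cq (sq' i) * lsT * (Z i) + (Z i) ^ 2) := by
    intro i
    induction i with
    | zero =>
      refine ⟨mul_ne_zero (hCqne u₃ hu₃) hxne, ?_, ?_⟩
      · rw [hZ0, HahnSeries.order_mul (hCqne u₃ hu₃) hxne, Cq_single,
          HahnSeries.order_single hu₃]
        omega
      · have hx' : (Cq v₁ * lsT ^ 2 + Cq v₂) * tDeriv x
            = Cq u₁ + Cq u₂ * lsT * x + Cq u₃ * x ^ 2 := hx
        have hd : tDeriv (Z 0) = Cq u₃ * tDeriv x := by
          rw [hZ0, tDeriv_mul, tDeriv_Cq, zero_mul, zero_add]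
        have hb0 : Cq (bq 0) = -(Cq u₁ * Cq u₃) := by
          simp only [Cq, ← map_mul, ← map_neg]
          congr 1
          simp [hbq]
        have hs0 : Cq (sq' 0) = Cq u₂ := by
          simp only [Cq]
          congr 1
          simp [hsq']
        rw [hd, hZ0, hb0, hs0]
        linear_combination Cq u₃ * hx'
    | succ k ih =>
      obtain ⟨hne, hord, hR⟩ := ih
      obtain ⟨hord1, hlead, hwne, hword⟩ :=
        riccati_shape v₁ v₂ (bq k) (sq' k) (hs2 k) (hb' k)
          (Z k) hne hord hR
      have hinvne : (Z k - HahnSeries.single (-1 : ℤ) (αf k))⁻¹ ≠ 0 := by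
        rw [show αf k = v₁ - sq' k from rfl]
        exact inv_ne_zero hwne
      refine ⟨?_, ?_, ?_⟩
      · rw [hZs k]
        exact mul_ne_zero (hCqne _ (hbq_ne (k+1) (by omega))) hinvne
      · rw [hZs k, HahnSeries.order_mul (hCqne _ (hbq_ne (k+1) (by omega))) hinvne,
          Cq_single, HahnSeries.order_single (hbq_ne (k+1) (by omega)),
          show αf k = v₁ - sq' k from rfl, order_inv _ hwne, hword]
        omega
      · have hnext := riccati_next v₁ v₂ (bq k) (sq' k) (αf k) rfl (Z k) hR
          (Z k - HahnSeries.single (-1 : ℤ) (αf k)) rfl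
          (by rw [show αf k = v₁ - sq' k from rfl]; exact hwne)
        rw [hZs k]
        rw [show Cq (bq (k+1)) = Cq (bq k + αf k * v₂) by rw [hbq_succ],
          show Cq (sq' (k+1)) = Cq (sq' k - 2 * v₁) by
            simp only [Cq]; congr 1; simp only [hsq']; push_cast; ring]
        exact hnext
  have shape : ∀ i, (Z i).order = -1 ∧
      (Z i - HahnSeries.single (-1 : ℤ) (αf i)) ≠ 0 ∧
      (Z i - HahnSeries.single (-1 : ℤ) (αf i)).order = 1 := by
    intro i
    obtain ⟨hne, hord, hR⟩ := good i
    obtain ⟨ho, _, hw1, hw2⟩ :=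
      riccati_shape v₁ v₂ (bq i) (sq' i) (hs2 i) (hb' i) (Z i) hne hord hR
    exact ⟨ho, hw1, hw2⟩
  have haS : ∀ i, a i = HahnSeries.single (-1 : ℤ) (αf i) := by
    intro i
    rw [ha i, show algebraMap ℚ (LaurentSeries ℚ) ((2 * (i : ℚ) + 1) * v₁ - u₂)
        = Cq (αf i) by simp only [Cq]; congr 1; rw [hα_eq],
      Cq_single, lsT, HahnSeries.single_mul_single]
    norm_num
  have hβS : ∀ i, β i = Cq (bq i) := fun i => hβ i
  have hβne : ∀ i : ℕ, 0 < i → β i ≠ 0 := by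
    intro i hi
    rw [hβS]
    exact hCqne _ (hbq_ne i hi)
  have hβord : ∀ i : ℕ, 0 < i → (β i).order = 0 := by
    intro i hi
    rw [hβS, Cq_single]
    exact HahnSeries.order_single (hbq_ne i hi)
  have hZrel : ∀ n, Z (n + 1) * (Z n - a n) = β (n + 1) := by
    intro n
    rw [haS n, hZs n, hβS, mul_assoc, inv_mul_cancel₀ (shape n).2.1, mul_one]
  set A : ℕ → LaurentSeries ℚ := fun n => Nat.casesOn n 1 (fun k => p k) with hA
  set B : ℕ → LaurentSeries ℚ := fun n => Nat.casesOn n 0 (fun k => q k) with hB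
  have hA2 : ∀ n, A (n + 2) = a (n + 1) * A (n + 1) + β (n + 1) * A n := by
    intro n
    cases n with
    | zero =>
      show p 1 = a 1 * p 0 + β 1 * 1
      rw [hp1, hp0]; ring
    | succ k =>
      show p (k + 2) = a (k + 2) * p (k + 1) + β (k + 2) * p k
      exact hp k
  have hB2 : ∀ n, B (n + 2) = a (n + 1) * B (n + 1) + β (n + 1) * B n := by
    intro n
    cases n with
    | zero =>
      show q 1 = a 1 * q 0 + β 1 * 0
      rw [hq1, hq0]; ring
    | succ k =>
      show q (k + 2) = a (k + 2) * q (k + 1) + β (k + 2) * q k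
      exact hq k
  have hJ : ∀ n, (Cq u₃ * x) * (Z (n + 1) * B (n + 1) + β (n + 1) * B n)
      = Z (n + 1) * A (n + 1) + β (n + 1) * A n := by
    intro n
    induction n with
    | zero =>
      show (Cq u₃ * x) * (Z 1 * q 0 + β 1 * 0) = Z 1 * p 0 + β 1 * 1
      rw [hq0, hp0]
      have h : Z 1 * (Cq u₃ * x - a 0) = β 1 := by
        rw [← hZ0]; exact hZrel 0
      linear_combination h
    | succ k ih =>
      have hr : Z (k + 2) * (Z (k + 1) - a (k + 1)) = β (k + 2) := hZrel (k + 1)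
      show (Cq u₃ * x) * (Z (k + 2) * B (k + 2) + β (k + 2) * B (k + 1))
        = Z (k + 2) * A (k + 2) + β (k + 2) * A (k + 1)
      rw [hA2 k, hB2 k]
      linear_combination Z (k + 2) * ih + (A (k + 1) - Cq u₃ * x * B (k + 1)) * hr
  have hD : ∀ n, (A (n + 1) * B n - A n * B (n + 1)) ≠ 0 ∧
      (A (n + 1) * B n - A n * B (n + 1)).order = 0 := by
    intro n
    induction n with
    | zero =>
      show A 1 * B 0 - A 0 * B 1 ≠ 0 ∧ (A 1 * B 0 - A 0 * B 1).order = 0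
      have h : A 1 * B 0 - A 0 * B 1 = -1 := by
        show p 0 * 0 - 1 * q 0 = -1
        rw [hq0]; ring
      rw [h, neg_one_single]
      exact ⟨HahnSeries.single_ne_zero (by norm_num),
        HahnSeries.order_single (by norm_num)⟩
    | succ k ih =>
      have hrec : A (k + 2) * B (k + 1) - A (k + 1) * B (k + 2)
          = (-(β (k + 1))) * (A (k + 1) * B k - A k * B (k + 1)) := by
        rw [hA2 k, hB2 k]; ring
      have hbne : (-(β (k + 1)) : LaurentSeries ℚ) ≠ 0 :=
        neg_ne_zero.mpr (hβne (k + 1) (by omega))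
      have hbord : (-(β (k + 1)) : LaurentSeries ℚ).order = 0 := by
        rw [hβS, Cq_single, hs_single_neg]
        exact HahnSeries.order_single (neg_ne_zero.mpr (hbq_ne (k + 1) (by omega)))
      rw [hrec]
      refine ⟨mul_ne_zero hbne ih.1, ?_⟩
      rw [HahnSeries.order_mul hbne ih.1, hbord, ih.2]
      ring
  have hBfact : ∀ n : ℕ, (B (n + 1) ≠ 0 ∧ (B (n + 1)).order = -(n : ℤ)) ∧
      (B (n + 2) ≠ 0 ∧ (B (n + 2)).order = -((n : ℤ) + 1)) := by
    intro n
    induction n with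
    | zero =>
      constructor
      · constructor
        · show q 0 ≠ 0
          rw [hq0]; exact one_ne_zero
        · show (q 0).order = 0
          rw [hq0]; exact HahnSeries.order_one
      · constructor
        · show q 1 ≠ 0
          rw [hq1, haS]
          exact HahnSeries.single_ne_zero (hα_ne 1)
        · show (q 1).order = -(0 + 1 : ℤ)
          rw [hq1, haS, HahnSeries.order_single (hα_ne 1)]
          norm_num
    | succ k ih =>
      obtain ⟨ih1, ih2⟩ := ih
      refine ⟨ih2, ?_⟩
      have hfne : a (k + 2) * B (k + 2) ≠ 0 := by
        rw [haS]
        exact mul_ne_zero (HahnSeries.single_ne_zero (hα_ne (k + 2))) ih2.1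
      have hford : (a (k + 2) * B (k + 2)).order = -((k : ℤ) + 2) := by
        rw [haS, HahnSeries.order_mul (HahnSeries.single_ne_zero (hα_ne (k + 2))) ih2.1,
          HahnSeries.order_single (hα_ne (k + 2)), ih2.2]
        ring
      have hgz : ∀ j ≤ (a (k + 2) * B (k + 2)).order, (β (k + 2) * B (k + 1)).coeff j = 0 := by
        intro j hj
        rw [hford] at hj
        have hgne : β (k + 2) * B (k + 1) ≠ 0 := mul_ne_zero (hβne _ (by omega)) ih1.1
        apply HahnSeries.coeff_eq_zero_of_lt_order
        rw [HahnSeries.order_mul (hβne _ (by omega)) ih1.1, hβord _ (by omega), ih1.2]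
        omega
      have := order_add_eq _ _ hfne hgz
      rw [← hB2 (k + 1)] at this
      refine ⟨this.1, ?_⟩
      rw [this.2, hford]
      push_cast
      ring
  have hE : ∀ n : ℕ, (Z (n + 1) * B (n + 1) + β (n + 1) * B n) ≠ 0 ∧
      (Z (n + 1) * B (n + 1) + β (n + 1) * B n).order = -((n : ℤ) + 1) := by
    intro n
    have hfne : Z (n + 1) * B (n + 1) ≠ 0 :=
      mul_ne_zero (good (n + 1)).1 (hBfact n).1.1
    have hford : (Z (n + 1) * B (n + 1)).order = -((n : ℤ) + 1) := by
      rw [HahnSeries.order_mul (good (n + 1)).1 (hBfact n).1.1, (shape (n + 1)).1,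
        (hBfact n).1.2]
      ring
    have hgz : ∀ j ≤ (Z (n + 1) * B (n + 1)).order, (β (n + 1) * B n).coeff j = 0 := by
      intro j hj
      rw [hford] at hj
      cases n with
      | zero =>
        show (β 1 * (0 : LaurentSeries ℚ)).coeff j = 0
        rw [mul_zero]
        rfl
      | succ m =>
        apply HahnSeries.coeff_eq_zero_of_lt_order
        rw [HahnSeries.order_mul (hβne _ (by omega)) (hBfact m).1.1,
          hβord _ (by omega), (hBfact m).1.2]
        push_cast at hj ⊢
        omega
    have := order_add_eq _ _ hfne hgz
    rw [hford] at this
    exact this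
  have hGE : ∀ n, (Cq u₃ * x * B (n + 1) - A (n + 1))
        * (Z (n + 1) * B (n + 1) + β (n + 1) * B n)
      = (-(β (n + 1))) * (A (n + 1) * B n - A n * B (n + 1)) := by
    intro n
    linear_combination B (n + 1) * hJ n
  have hG : ∀ n, (Cq u₃ * x * B (n + 1) - A (n + 1)) ≠ 0 ∧
      (Cq u₃ * x * B (n + 1) - A (n + 1)).order = (n : ℤ) + 1 := by
    intro n
    have hbne : (-(β (n + 1)) : LaurentSeries ℚ) ≠ 0 :=
      neg_ne_zero.mpr (hβne (n + 1) (by omega))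
    have hbord : (-(β (n + 1)) : LaurentSeries ℚ).order = 0 := by
      rw [hβS, Cq_single, hs_single_neg]
      exact HahnSeries.order_single (neg_ne_zero.mpr (hbq_ne (n + 1) (by omega)))
    have hRne : (-(β (n + 1))) * (A (n + 1) * B n - A n * B (n + 1)) ≠ 0 :=
      mul_ne_zero hbne (hD n).1
    have hGne : (Cq u₃ * x * B (n + 1) - A (n + 1)) ≠ 0 := by
      intro h0
      apply hRne
      rw [← hGE n, h0, zero_mul]
    refine ⟨hGne, ?_⟩
    have h1' := HahnSeries.order_mul hGne (hE n).1
    rw [hGE n, HahnSeries.order_mul hbne (hD n).1, hbord, (hD n).2, (hE n).2] at h1'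
    omega
  intro N
  refine ⟨N.toNat, fun n hn => ?_⟩
  have hqB : q n = B (n + 1) := rfl
  have hpA : p n = A (n + 1) := rfl
  have hBne := (hBfact n).1.1
  constructor
  · rw [hqB]; exact hBne
  · have hkey : algebraMap ℚ (LaurentSeries ℚ) u₃ * x - p n / q n
        = (Cq u₃ * x * B (n + 1) - A (n + 1)) / B (n + 1) := by
      rw [hpA, hqB, show algebraMap ℚ (LaurentSeries ℚ) u₃ = Cq u₃ from rfl]
      field_simp
    rw [hkey]
    have hdivne : (Cq u₃ * x * B (n + 1) - A (n + 1)) / B (n + 1) ≠ 0 :=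
      div_ne_zero (hG n).1 hBne
    have hdivord : ((Cq u₃ * x * B (n + 1) - A (n + 1)) / B (n + 1)).order
        = 2 * (n : ℤ) + 1 := by
      rw [div_eq_mul_inv, HahnSeries.order_mul (hG n).1 (inv_ne_zero hBne),
        order_inv _ hBne, (hG n).2, (hBfact n).1.2]
      ring
    rw [← HahnSeries.order_eq_orderTop_of_ne_zero hdivne, hdivord]
    have hNn : N ≤ (n : ℤ) := by
      have := hn
      omega
    exact_mod_cast (by omega : N ≤ 2 * (n : ℤ) + 1)
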